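/- arXiv:1803.00190 — 2 statements merged into one kernel-verified Lean document; each statement's English description precedes it below -/
import Mathlib

section
/- Let data points (x^ℓ, y_ℓ) ∈ ℝ^d × ℝ, ℓ = 1,…,N, be given, let k₁, k₂ ≥ 1, and for Θ = ((aⁱ, αᵢ)_{i=1}^{k₁}, (bʲ, βⱼ)_{j=1}^{k₂}) ∈ ℝ^{(k₁+k₂)(d+1)} define f(Θ) = (1/(2N)) Σ_{ℓ=1}^{N} ( y_ℓ − [ max_{1≤i≤k₁}((aⁱ)ᵀx^ℓ + αᵢ) − max_{1≤j≤k₂}((bʲ)ᵀx^ℓ + βⱼ) ] )². Then for any nonempty polyhedral set X ⊆ ℝ^{(k₁+k₂)(d+1)}, the infimum of f over X is finite and is attained at some Θ* ∈ X. -/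
open Matrix Filter

noncomputable def finMax {k : ℕ} (hk : 0 < k) (g : Fin k → ℝ) : ℝ :=
  Finset.univ.sup' (Finset.univ_nonempty_iff.mpr ⟨⟨0, hk⟩⟩) g

/-- The parameter space `Θ = ((aⁱ, αᵢ)_{i=1}^{k₁}, (bʲ, βⱼ)_{j=1}^{k₂})`, a copy of
`ℝ^{(k₁+k₂)(d+1)}`. -/
abbrev RegSpace (d k₁ k₂ : ℕ) := (Fin k₁ → (Fin d → ℝ) × ℝ) × (Fin k₂ → (Fin d → ℝ) × ℝ)

/-- The least-squares piecewise affine regression objective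
`f(Θ) = (1/(2N)) Σ_ℓ (y_ℓ − [maxᵢ((aⁱ)ᵀxℓ + αᵢ) − maxⱼ((bʲ)ᵀxℓ + βⱼ)])²`. -/
noncomputable def regObj {d N k₁ k₂ : ℕ} (hk₁ : 0 < k₁) (hk₂ : 0 < k₂)
    (x : Fin N → Fin d → ℝ) (y : Fin N → ℝ) (Θ : RegSpace d k₁ k₂) : ℝ :=
  (1 / (2 * (N : ℝ))) * ∑ ℓ : Fin N, (y ℓ -
      (finMax hk₁ (fun i => (Θ.1 i).1 ⬝ᵥ x ℓ + (Θ.1 i).2) -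
       finMax hk₂ (fun j => (Θ.2 j).1 ⬝ᵥ x ℓ + (Θ.2 j).2))) ^ 2

/-- A polyhedral subset of a real normed space: the solution set of finitely many
continuous linear inequalities. -/
def IsPolyhedralE {E : Type*} [NormedAddCommGroup E] [NormedSpace ℝ E] (X : Set E) : Prop :=
  ∃ (m : ℕ) (L : Fin m → E →L[ℝ] ℝ) (b : Fin m → ℝ), X = {θ | ∀ i, L i θ ≤ b i}

/-- The one-sided directional derivative of `f` at `x` in direction `v` equals `L`. -/
def HasDirDerivE {E : Type*} [NormedAddCommGroup E] [NormedSpace ℝ E]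
    (f : E → ℝ) (x v : E) (L : ℝ) : Prop :=
  Filter.Tendsto (fun δ : ℝ => (f (x + δ • v) - f x) / δ) (nhdsWithin 0 (Set.Ioi 0)) (nhds L)

/-- `x₀` is a d(irectional)-stationary point of `f` on `X`. -/
def DStatE {E : Type*} [NormedAddCommGroup E] [NormedSpace ℝ E]
    (f : E → ℝ) (X : Set E) (x₀ : E) : Prop :=
  x₀ ∈ X ∧ ∀ x ∈ X, ∃ L, HasDirDerivE f x₀ (x - x₀) L ∧ 0 ≤ L


variable {E F : Type*} [NormedAddCommGroup E] [NormedSpace ℝ E]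
  [NormedAddCommGroup F] [NormedSpace ℝ F]

lemma isPolyhedralE_of_fintype {ι : Type*} [Fintype ι]
    (L : ι → E →L[ℝ] ℝ) (b : ι → ℝ) : IsPolyhedralE {θ | ∀ i, L i θ ≤ b i} := by
  refine ⟨Fintype.card ι, fun i => L ((Fintype.equivFin ι).symm i),
    fun i => b ((Fintype.equivFin ι).symm i), ?_⟩
  ext θ
  constructor
  · intro h i; exact h _
  · intro h i; simpa using h (Fintype.equivFin ι i)

lemma IsPolyhedralE.isClosed {X : Set E} (h : IsPolyhedralE X) : IsClosed X := by
  obtain ⟨m, L, b, rfl⟩ := h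
  have : {θ : E | ∀ i, L i θ ≤ b i} = ⋂ i, {θ | L i θ ≤ b i} := by ext θ; simp
  rw [this]
  exact isClosed_iInter fun i => isClosed_le (L i).continuous continuous_const

lemma IsPolyhedralE.inter {X Y : Set E} (hX : IsPolyhedralE X) (hY : IsPolyhedralE Y) :
    IsPolyhedralE (X ∩ Y) := by
  obtain ⟨m, L, b, rfl⟩ := hX
  obtain ⟨m', L', b', rfl⟩ := hY
  have : {θ : E | ∀ i, L i θ ≤ b i} ∩ {θ | ∀ i, L' i θ ≤ b' i}
      = {θ | ∀ i : Fin m ⊕ Fin m', Sum.elim L L' i θ ≤ Sum.elim b b' i} := by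
    ext θ; simp [Sum.forall, Set.mem_inter_iff]
  rw [this]
  exact isPolyhedralE_of_fintype _ _

lemma IsPolyhedralE.image_equiv {X : Set E} (h : IsPolyhedralE X) (e : E ≃L[ℝ] F) :
    IsPolyhedralE (e '' X) := by
  obtain ⟨m, L, b, rfl⟩ := h
  refine ⟨m, fun i => (L i).comp (e.symm : F →L[ℝ] E), b, ?_⟩
  ext z
  simp only [Set.mem_image, Set.mem_setOf_eq, ContinuousLinearMap.comp_apply,
    ContinuousLinearEquiv.coe_coe]
  constructor
  · rintro ⟨θ, hθ, rfl⟩ i; simpa using hθ i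
  · intro h; exact ⟨e.symm z, h, by simp⟩
lemma fm_elim {S : Set (E × ℝ)} (hS : IsPolyhedralE S) : IsPolyhedralE (Prod.fst '' S) := by
  classical
  obtain ⟨m, L, b, rfl⟩ := hS
  set g : Fin m → E →L[ℝ] ℝ := fun i => (L i).comp (ContinuousLinearMap.inl ℝ E ℝ) with hg
  set c : Fin m → ℝ := fun i => L i (0, 1) with hc
  have hL : ∀ (i) (e : E) (t : ℝ), L i (e, t) = g i e + t * c i := by
    intro i e t
    have h1 : (e, t) = ((e, (0:ℝ)) + t • ((0:E), (1:ℝ))) := by simp [Prod.ext_iff]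
    rw [h1, map_add, _root_.map_smul]
    simp only [hg, hc, ContinuousLinearMap.comp_apply, ContinuousLinearMap.inl_apply,
      smul_eq_mul]
    try ring
  set K : (Fin m ⊕ Fin m × Fin m) → E →L[ℝ] ℝ := fun i => match i with
    | .inl i => if c i = 0 then g i else 0
    | .inr (i, j) => if 0 < c i ∧ c j < 0 then (-c j) • g i + (c i) • g j else 0
    with hK
  set β : (Fin m ⊕ Fin m × Fin m) → ℝ := fun i => match i with
    | .inl i => if c i = 0 then b i else 0
    | .inr (i, j) => if 0 < c i ∧ c j < 0 then (-c j) * b i + c i * b j else 0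
    with hβ
  have key : Prod.fst '' {p : E × ℝ | ∀ i, L i p ≤ b i} = {e | ∀ i, K i e ≤ β i} := by
    ext e
    constructor
    · rintro ⟨⟨e', t⟩, hmem, rfl⟩
      have hm : ∀ i, g i e' + t * c i ≤ b i := fun i => by rw [← hL]; exact hmem i
      rintro (i | ⟨i, j⟩)
      · simp only [hK, hβ]
        by_cases h0 : c i = 0
        · simp only [if_pos h0]
          have := hm i; rw [h0] at this; simpa using this
        · simp [if_neg h0]
      · simp only [hK, hβ]
        by_cases h0 : 0 < c i ∧ c j < 0
        · simp only [if_pos h0, ContinuousLinearMap.add_apply, ContinuousLinearMap.coe_smul',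
            Pi.smul_apply, smul_eq_mul]
          have hi := hm i
          have hj := hm j
          nlinarith [h0.1, h0.2]
        · simp [if_neg h0]
    · intro h
      -- extract the scalar consequences
      have hz : ∀ i, c i = 0 → g i e ≤ b i := by
        intro i h0
        have := h (Sum.inl i)
        simpa [hK, hβ, if_pos h0] using this
      have hpair : ∀ i j, 0 < c i → c j < 0 →
          (-c j) * g i e + c i * g j e ≤ (-c j) * b i + c i * b j := by
        intro i j hi hj
        have := h (Sum.inr (i, j))
        simpa [hK, hβ, if_pos (⟨hi, hj⟩ : 0 < c i ∧ c j < 0)] using this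
      -- a lower bound l j ≤ upper bound u i
      have hlu : ∀ i j, 0 < c i → c j < 0 →
          (g j e - b j) / (-c j) ≤ (b i - g i e) / c i := by
        intro i j hi hj
        rw [div_le_div_iff₀ (by linarith) hi]
        have := hpair i j hi hj
        nlinarith
      -- find t
      suffices hex : ∃ t, ∀ i, g i e + t * c i ≤ b i by
        obtain ⟨t, ht⟩ := hex
        exact ⟨(e, t), fun i => by rw [hL]; exact ht i, rfl⟩
      by_cases hU : ∃ i, 0 < c i
      · obtain ⟨i₀, hi₀⟩ := hU
        set U : Finset (Fin m) := Finset.univ.filter (fun i => 0 < c i) with hUdef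
        have hUne : U.Nonempty := ⟨i₀, Finset.mem_filter.mpr ⟨Finset.mem_univ i₀, hi₀⟩⟩
        set t : ℝ := U.inf' hUne (fun i => (b i - g i e) / c i) with htdef
        refine ⟨t, fun i => ?_⟩
        rcases lt_trichotomy (c i) 0 with hneg | hzero | hpos
        · -- lower bound case: t ≥ l i
          obtain ⟨i₁, hi₁U, hi₁⟩ := Finset.exists_mem_eq_inf' hUne (fun i => (b i - g i e) / c i)
          have hi₁pos : 0 < c i₁ := by
            have := Finset.mem_filter.mp hi₁U; exact this.2
          have hl : (g i e - b i) / (-c i) ≤ t := by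
            rw [htdef, hi₁]; exact hlu i₁ i hi₁pos hneg
          have : (g i e - b i) ≤ t * (-c i) := by
            rw [div_le_iff₀ (by linarith)] at hl; linarith [hl]
          linarith
        · rw [hzero]; simpa using hz i hzero
        · have hle : t ≤ (b i - g i e) / c i := Finset.inf'_le _ (Finset.mem_filter.mpr ⟨Finset.mem_univ i, hpos⟩)
          have : t * c i ≤ b i - g i e := by
            rw [le_div_iff₀ hpos] at hle; linarith
          linarith
      · by_cases hD : ∃ j, c j < 0
        · obtain ⟨j₀, hj₀⟩ := hD
          set D : Finset (Fin m) := Finset.univ.filter (fun j => c j < 0) with hDdef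
          have hDne : D.Nonempty := ⟨j₀, Finset.mem_filter.mpr ⟨Finset.mem_univ j₀, hj₀⟩⟩
          set t : ℝ := D.sup' hDne (fun j => (g j e - b j) / (-c j)) with htdef
          refine ⟨t, fun i => ?_⟩
          rcases lt_trichotomy (c i) 0 with hneg | hzero | hpos
          · have hle : (g i e - b i) / (-c i) ≤ t := by
              rw [htdef]
              exact Finset.le_sup' (fun j => (g j e - b j) / (-c j)) (Finset.mem_filter.mpr ⟨Finset.mem_univ i, hneg⟩)
            rw [div_le_iff₀ (by linarith)] at hle
            linarith
          · rw [hzero]; simpa using hz i hzero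
          · exact absurd ⟨i, hpos⟩ hU
        · refine ⟨0, fun i => ?_⟩
          have hzero : c i = 0 := by
            rcases lt_trichotomy (c i) 0 with h1 | h1 | h1
            · exact absurd ⟨i, h1⟩ hD
            · exact h1
            · exact absurd ⟨i, h1⟩ hU
          rw [hzero]; simp only [mul_zero, zero_mul, add_zero]; exact hz i hzero
  rw [key]
  exact isPolyhedralE_of_fintype K β

/-- The linear equivalence `F × (ℝ^{n+1}) ≃ (F × ℝ^n) × ℝ` splitting off the head coordinate. -/
noncomputable def splitEquiv (F : Type*) [NormedAddCommGroup F] [NormedSpace ℝ F]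
    [FiniteDimensional ℝ F] (n : ℕ) :
    (F × (Fin (n + 1) → ℝ)) ≃L[ℝ] (F × (Fin n → ℝ)) × ℝ :=
  LinearEquiv.toContinuousLinearEquiv
  { toFun := fun p => ((p.1, fun i => p.2 i.succ), p.2 0)
    invFun := fun q => (q.1.1, Fin.cons q.2 q.1.2)
    map_add' := fun _ _ => rfl
    map_smul' := fun _ _ => rfl
    left_inv := fun p => by
      refine Prod.ext rfl ?_
      exact funext fun i => Fin.cases rfl (fun j => rfl) i
    right_inv := fun q => by
      refine Prod.ext (Prod.ext rfl ?_) rfl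
      exact funext fun i => rfl }

lemma proj_pi {F : Type*} [NormedAddCommGroup F] [NormedSpace ℝ F] [FiniteDimensional ℝ F] :
    ∀ (n : ℕ) (S : Set (F × (Fin n → ℝ))), IsPolyhedralE S → IsPolyhedralE (Prod.fst '' S) := by
  intro n
  induction n with
  | zero =>
    intro S hS
    obtain ⟨m, L, b, rfl⟩ := hS
    have key : Prod.fst '' {p : F × (Fin 0 → ℝ) | ∀ i, L i p ≤ b i}
        = {z | ∀ i, ((L i).comp (ContinuousLinearMap.inl ℝ F (Fin 0 → ℝ))) z ≤ b i} := by
      ext z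
      simp only [Set.mem_image, Set.mem_setOf_eq, ContinuousLinearMap.comp_apply,
        ContinuousLinearMap.inl_apply]
      constructor
      · rintro ⟨⟨z', v⟩, hm, rfl⟩ i
        have : v = 0 := Subsingleton.elim _ _
        subst this
        exact hm i
      · intro h
        exact ⟨(z, 0), h, rfl⟩
    rw [key]
    exact isPolyhedralE_of_fintype _ _
  | succ n ih =>
    intro S hS
    have h1 : IsPolyhedralE ((splitEquiv F n) '' S) := hS.image_equiv _
    have h2 : IsPolyhedralE (Prod.fst '' ((splitEquiv F n) '' S)) := fm_elim h1
    have h3 := ih _ h2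
    have key : Prod.fst '' (Prod.fst '' ((splitEquiv F n) '' S)) = Prod.fst '' S := by
      rw [Set.image_image, Set.image_image]
      exact Set.image_congr fun p _ => rfl
    rw [key] at h3
    exact h3

lemma proj_fd {F E : Type*} [NormedAddCommGroup F] [NormedSpace ℝ F] [FiniteDimensional ℝ F]
    [NormedAddCommGroup E] [NormedSpace ℝ E] [FiniteDimensional ℝ E]
    {S : Set (F × E)} (hS : IsPolyhedralE S) : IsPolyhedralE (Prod.fst '' S) := by
  let e : E ≃L[ℝ] (Fin (Module.finrank ℝ E) → ℝ) :=
    (Module.finBasis ℝ E).equivFun.toContinuousLinearEquiv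
  let ψ : (F × E) ≃L[ℝ] F × (Fin (Module.finrank ℝ E) → ℝ) :=
    (ContinuousLinearEquiv.refl ℝ F).prodCongr e
  have key : Prod.fst '' S = Prod.fst '' (ψ '' S) := by
    rw [Set.image_image]; rfl
  rw [key]
  exact proj_pi _ _ (hS.image_equiv ψ)

lemma image_clm {E : Type*} [NormedAddCommGroup E] [NormedSpace ℝ E] [FiniteDimensional ℝ E]
    {N : ℕ} (A : E →L[ℝ] (Fin N → ℝ)) {C : Set E} (hC : IsPolyhedralE C) :
    IsPolyhedralE (A '' C) := by
  classical
  obtain ⟨m, L, b, rfl⟩ := hC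
  set F := Fin N → ℝ
  set K : (Fin m ⊕ (Fin N ⊕ Fin N)) → (F × E) →L[ℝ] ℝ := fun i => match i with
    | .inl i => (L i).comp (ContinuousLinearMap.snd ℝ F E)
    | .inr (.inl ℓ) => (ContinuousLinearMap.proj ℓ).comp (A.comp (ContinuousLinearMap.snd ℝ F E))
        - (ContinuousLinearMap.proj ℓ).comp (ContinuousLinearMap.fst ℝ F E)
    | .inr (.inr ℓ) => (ContinuousLinearMap.proj ℓ).comp (ContinuousLinearMap.fst ℝ F E)
        - (ContinuousLinearMap.proj ℓ).comp (A.comp (ContinuousLinearMap.snd ℝ F E))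
    with hK
  set β : (Fin m ⊕ (Fin N ⊕ Fin N)) → ℝ := fun i => match i with
    | .inl i => b i
    | .inr _ => 0
    with hβ
  have key : A '' {θ | ∀ i, L i θ ≤ b i} = Prod.fst '' {p : F × E | ∀ i, K i p ≤ β i} := by
    ext z
    simp only [Set.mem_image, Set.mem_setOf_eq]
    constructor
    · rintro ⟨θ, hθ, rfl⟩
      refine ⟨(A θ, θ), ?_, rfl⟩
      rintro (i | (ℓ | ℓ))
      · simpa [hK, hβ] using hθ i
      · simp [hK, hβ]
      · simp [hK, hβ]
    · rintro ⟨⟨z', θ⟩, hp, rfl⟩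
      refine ⟨θ, fun i => by simpa [hK, hβ] using hp (Sum.inl i), ?_⟩
      funext ℓ
      have h1 := hp (Sum.inr (Sum.inl ℓ))
      have h2 := hp (Sum.inr (Sum.inr ℓ))
      simp [hK, hβ] at h1 h2
      linarith
  rw [key]
  exact proj_fd (isPolyhedralE_of_fintype K β)

noncomputable def qObj (N : ℕ) (y : Fin N → ℝ) (z : Fin N → ℝ) : ℝ :=
  (1 / (2 * (N : ℝ))) * ∑ ℓ, (y ℓ - z ℓ) ^ 2

lemma qObj_continuous (N : ℕ) (y : Fin N → ℝ) : Continuous (qObj N y) := by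
  apply continuous_const.mul
  exact continuous_finset_sum _ fun ℓ _ => ((continuous_const.sub (continuous_apply ℓ)).pow 2)

lemma qObj_min {N : ℕ} (hN : 0 < N) (y : Fin N → ℝ) {S : Set (Fin N → ℝ)}
    (hS : IsClosed S) (hne : S.Nonempty) :
    ∃ z ∈ S, ∀ w ∈ S, qObj N y z ≤ qObj N y w := by
  obtain ⟨z₀, hz₀⟩ := hne
  have hcN : (0:ℝ) < 1 / (2 * (N : ℝ)) := by positivity
  set K : Set (Fin N → ℝ) := S ∩ {z | qObj N y z ≤ qObj N y z₀} with hKdef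
  have hKz₀ : z₀ ∈ K := ⟨hz₀, by simp⟩
  have hKclosed : IsClosed K :=
    hS.inter (isClosed_le (qObj_continuous N y) continuous_const)
  -- boundedness
  set M : ℝ := qObj N y z₀ * (2 * (N : ℝ)) with hMdef
  have hM0 : 0 ≤ M := by
    apply mul_nonneg _ (by positivity)
    rw [qObj]
    exact mul_nonneg hcN.le (Finset.sum_nonneg fun ℓ _ => sq_nonneg _)
  set R : ℝ := ‖y‖ + Real.sqrt M with hRdef
  have hsub : K ⊆ Metric.closedBall 0 R := by
    rintro z ⟨hzS, hzq⟩
    rw [Metric.mem_closedBall, dist_zero_right]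
    have hsum : ∑ ℓ, (y ℓ - z ℓ) ^ 2 ≤ M := by
      have : qObj N y z ≤ qObj N y z₀ := hzq
      rw [qObj] at this
      rw [hMdef]
      calc ∑ ℓ, (y ℓ - z ℓ) ^ 2
          = (1 / (2 * (N:ℝ)) * ∑ ℓ, (y ℓ - z ℓ) ^ 2) * (2 * (N:ℝ)) := by
            field_simp
        _ ≤ qObj N y z₀ * (2 * (N:ℝ)) := by
            apply mul_le_mul_of_nonneg_right this (by positivity)
    have : ∀ ℓ, ‖z ℓ‖ ≤ R := by
      intro ℓ
      have h1 : (y ℓ - z ℓ) ^ 2 ≤ M :=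
        le_trans (Finset.single_le_sum (fun ℓ _ => sq_nonneg (y ℓ - z ℓ))
          (Finset.mem_univ ℓ)) hsum
      have h2 : |y ℓ - z ℓ| ≤ Real.sqrt M := by
        apply Real.abs_le_sqrt
        simpa [sq_abs] using h1
      have h3 : |z ℓ| ≤ |y ℓ| + |y ℓ - z ℓ| := by
        have := abs_sub_abs_le_abs_sub (z ℓ) (y ℓ)
        rw [abs_sub_comm (z ℓ) (y ℓ)] at this
        linarith [abs_nonneg (y ℓ)]
      have h4 : |y ℓ| ≤ ‖y‖ := by
        simpa [Real.norm_eq_abs] using norm_le_pi_norm y ℓ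
      rw [Real.norm_eq_abs, hRdef]
      linarith
    exact pi_norm_le_iff_of_nonneg (by positivity) |>.mpr this
  have hKcompact : IsCompact K :=
    (isCompact_closedBall (0 : Fin N → ℝ) R).of_isClosed_subset hKclosed hsub
  obtain ⟨z, hzK, hzmin⟩ := hKcompact.exists_isMinOn ⟨z₀, hKz₀⟩
    ((qObj_continuous N y).continuousOn)
  refine ⟨z, hzK.1, fun w hw => ?_⟩
  by_cases hwK : qObj N y w ≤ qObj N y z₀
  · exact hzmin ⟨hw, hwK⟩
  · exact le_trans (hzmin hKz₀) (le_of_not_ge hwK)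

lemma min_linear_piece {E : Type*} [NormedAddCommGroup E] [NormedSpace ℝ E]
    [FiniteDimensional ℝ E] {N : ℕ} (hN : 0 < N) (y : Fin N → ℝ)
    (A : E →L[ℝ] (Fin N → ℝ)) {C : Set E} (hC : IsPolyhedralE C) (hne : C.Nonempty) :
    ∃ θ ∈ C, ∀ θ' ∈ C, qObj N y (A θ) ≤ qObj N y (A θ') := by
  have hS : IsPolyhedralE (A '' C) := image_clm A hC
  obtain ⟨z, hz, hzmin⟩ := qObj_min hN y hS.isClosed (hne.image A)
  obtain ⟨θ, hθ, rfl⟩ := hz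
  exact ⟨θ, hθ, fun θ' hθ' => hzmin _ ⟨θ', hθ', rfl⟩⟩

section Pieces

variable {d N k₁ k₂ : ℕ}

/-- The linear functional `Θ ↦ (aⁱ)ᵀw + αᵢ` on the parameter space. -/
noncomputable def ev1 (d k₁ k₂ : ℕ) (w : Fin d → ℝ) (i : Fin k₁) :
    RegSpace d k₁ k₂ →L[ℝ] ℝ :=
  LinearMap.toContinuousLinearMap <| IsLinearMap.mk'
    (fun Θ : RegSpace d k₁ k₂ => (Θ.1 i).1 ⬝ᵥ w + (Θ.1 i).2)
    { map_add := by
        intro p q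
        simp [add_dotProduct]
        ring
      map_smul := by
        intro c p
        simp [smul_dotProduct, smul_eq_mul]
        ring }

/-- The linear functional `Θ ↦ (bʲ)ᵀw + βⱼ` on the parameter space. -/
noncomputable def ev2 (d k₁ k₂ : ℕ) (w : Fin d → ℝ) (j : Fin k₂) :
    RegSpace d k₁ k₂ →L[ℝ] ℝ :=
  LinearMap.toContinuousLinearMap <| IsLinearMap.mk'
    (fun Θ : RegSpace d k₁ k₂ => (Θ.2 j).1 ⬝ᵥ w + (Θ.2 j).2)
    { map_add := by
        intro p q
        simp [add_dotProduct]
        ring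
      map_smul := by
        intro c p
        simp [smul_dotProduct, smul_eq_mul]
        ring }

@[simp] lemma ev1_apply (w : Fin d → ℝ) (i : Fin k₁) (Θ : RegSpace d k₁ k₂) :
    ev1 d k₁ k₂ w i Θ = (Θ.1 i).1 ⬝ᵥ w + (Θ.1 i).2 := rfl

@[simp] lemma ev2_apply (w : Fin d → ℝ) (j : Fin k₂) (Θ : RegSpace d k₁ k₂) :
    ev2 d k₁ k₂ w j Θ = (Θ.2 j).1 ⬝ᵥ w + (Θ.2 j).2 := rfl

/-- The affine (indeed linear) map selecting the pieces given by `s`. -/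
noncomputable def amap (x : Fin N → Fin d → ℝ) (s : Fin N → Fin k₁ × Fin k₂) :
    RegSpace d k₁ k₂ →L[ℝ] (Fin N → ℝ) :=
  ContinuousLinearMap.pi fun ℓ => ev1 d k₁ k₂ (x ℓ) (s ℓ).1 - ev2 d k₁ k₂ (x ℓ) (s ℓ).2

/-- The polyhedral piece on which `s` gives the argmaxes. -/
def piece (x : Fin N → Fin d → ℝ) (s : Fin N → Fin k₁ × Fin k₂) : Set (RegSpace d k₁ k₂) :=
  {Θ | (∀ ℓ i, ev1 d k₁ k₂ (x ℓ) i Θ ≤ ev1 d k₁ k₂ (x ℓ) (s ℓ).1 Θ) ∧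
       (∀ ℓ j, ev2 d k₁ k₂ (x ℓ) j Θ ≤ ev2 d k₁ k₂ (x ℓ) (s ℓ).2 Θ)}

lemma piece_polyhedral (x : Fin N → Fin d → ℝ) (s : Fin N → Fin k₁ × Fin k₂) :
    IsPolyhedralE (piece x s) := by
  classical
  set K : ((Fin N × Fin k₁) ⊕ (Fin N × Fin k₂)) → RegSpace d k₁ k₂ →L[ℝ] ℝ := fun i =>
    match i with
    | .inl (ℓ, i) => ev1 d k₁ k₂ (x ℓ) i - ev1 d k₁ k₂ (x ℓ) (s ℓ).1
    | .inr (ℓ, j) => ev2 d k₁ k₂ (x ℓ) j - ev2 d k₁ k₂ (x ℓ) (s ℓ).2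
    with hK
  have key : piece x s = {Θ | ∀ i, K i Θ ≤ (0 : ℝ)} := by
    ext Θ
    simp only [piece, Set.mem_setOf_eq, hK]
    constructor
    · rintro ⟨h1, h2⟩ (⟨ℓ, i⟩ | ⟨ℓ, j⟩)
      · simpa [sub_nonpos] using h1 ℓ i
      · simpa [sub_nonpos] using h2 ℓ j
    · intro h
      constructor
      · intro ℓ i
        have := h (Sum.inl (ℓ, i))
        simpa [sub_nonpos] using this
      · intro ℓ j
        have := h (Sum.inr (ℓ, j))
        simpa [sub_nonpos] using this
  rw [key]
  exact isPolyhedralE_of_fintype K (fun _ => 0)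

lemma exists_piece (hk₁ : 0 < k₁) (hk₂ : 0 < k₂) (x : Fin N → Fin d → ℝ)
    (Θ : RegSpace d k₁ k₂) : ∃ s, Θ ∈ piece x s := by
  have ne1 : Nonempty (Fin k₁) := ⟨⟨0, hk₁⟩⟩
  have ne2 : Nonempty (Fin k₂) := ⟨⟨0, hk₂⟩⟩
  have h1 : ∀ ℓ, ∃ i, ∀ i', ev1 d k₁ k₂ (x ℓ) i' Θ ≤ ev1 d k₁ k₂ (x ℓ) i Θ := fun ℓ =>
    Finite.exists_max _
  have h2 : ∀ ℓ, ∃ j, ∀ j', ev2 d k₁ k₂ (x ℓ) j' Θ ≤ ev2 d k₁ k₂ (x ℓ) j Θ := fun ℓ =>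
    Finite.exists_max _
  choose i1 hi1 using h1
  choose j2 hj2 using h2
  exact ⟨fun ℓ => (i1 ℓ, j2 ℓ), fun ℓ i => hi1 ℓ i, fun ℓ j => hj2 ℓ j⟩

lemma regObj_eq_on_piece (hk₁ : 0 < k₁) (hk₂ : 0 < k₂) (x : Fin N → Fin d → ℝ)
    (y : Fin N → ℝ) (s : Fin N → Fin k₁ × Fin k₂) {Θ : RegSpace d k₁ k₂}
    (hΘ : Θ ∈ piece x s) :
    regObj hk₁ hk₂ x y Θ = qObj N y (amap x s Θ) := by
  rw [regObj, qObj]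
  congr 1
  apply Finset.sum_congr rfl
  intro ℓ _
  have hmax1 : finMax hk₁ (fun i => (Θ.1 i).1 ⬝ᵥ x ℓ + (Θ.1 i).2)
      = ev1 d k₁ k₂ (x ℓ) (s ℓ).1 Θ := by
    apply le_antisymm
    · rw [finMax]
      apply Finset.sup'_le
      intro i _
      simpa using hΘ.1 ℓ i
    · exact Finset.le_sup' (fun i => (Θ.1 i).1 ⬝ᵥ x ℓ + (Θ.1 i).2) (Finset.mem_univ (s ℓ).1)
  have hmax2 : finMax hk₂ (fun j => (Θ.2 j).1 ⬝ᵥ x ℓ + (Θ.2 j).2)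
      = ev2 d k₁ k₂ (x ℓ) (s ℓ).2 Θ := by
    apply le_antisymm
    · rw [finMax]
      apply Finset.sup'_le
      intro j _
      simpa using hΘ.2 ℓ j
    · exact Finset.le_sup' (fun j => (Θ.2 j).1 ⬝ᵥ x ℓ + (Θ.2 j).2) (Finset.mem_univ (s ℓ).2)
  rw [hmax1, hmax2]
  rfl

end Pieces

/-- Proposition 16(a): the least-squares piecewise affine regression objective attains a
finite globally minimum value on any nonempty polyhedral set `X`. -/
theorem stmt_17 {d N k₁ k₂ : ℕ} (hN : 0 < N) (hk₁ : 0 < k₁) (hk₂ : 0 < k₂)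
    (x : Fin N → Fin d → ℝ) (y : Fin N → ℝ)
    (X : Set (RegSpace d k₁ k₂)) (hX : IsPolyhedralE X) (hne : X.Nonempty) :
    ∃ Θstar ∈ X, ∀ Θ ∈ X, regObj hk₁ hk₂ x y Θstar ≤ regObj hk₁ hk₂ x y Θ := by
  classical
  have key : ∀ s : Fin N → Fin k₁ × Fin k₂, (X ∩ piece x s).Nonempty →
      ∃ θ, θ ∈ X ∩ piece x s ∧ ∀ θ' ∈ X ∩ piece x s,
        regObj hk₁ hk₂ x y θ ≤ regObj hk₁ hk₂ x y θ' := by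
    intro s hs
    obtain ⟨θ, hθ, hmin⟩ := min_linear_piece hN y (amap x s)
      (hX.inter (piece_polyhedral x s)) hs
    refine ⟨θ, hθ, fun θ' hθ' => ?_⟩
    rw [regObj_eq_on_piece hk₁ hk₂ x y s hθ.2, regObj_eq_on_piece hk₁ hk₂ x y s hθ'.2]
    exact hmin θ' hθ'
  choose θf hmem hminf using key
  set T : Finset (Fin N → Fin k₁ × Fin k₂) :=
    Finset.univ.filter (fun s => (X ∩ piece x s).Nonempty) with hT
  have hTne : T.Nonempty := by
    obtain ⟨Θ₀, hΘ₀⟩ := hne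
    obtain ⟨s₀, hs₀⟩ := exists_piece hk₁ hk₂ x Θ₀
    exact ⟨s₀, Finset.mem_filter.mpr ⟨Finset.mem_univ _, ⟨Θ₀, hΘ₀, hs₀⟩⟩⟩
  set v : (Fin N → Fin k₁ × Fin k₂) → ℝ := fun s =>
    if h : (X ∩ piece x s).Nonempty then regObj hk₁ hk₂ x y (θf s h) else 0 with hv
  obtain ⟨sstar, hsstarT, hsstarmin⟩ := T.exists_min_image v hTne
  have hsstar : (X ∩ piece x sstar).Nonempty := (Finset.mem_filter.mp hsstarT).2
  refine ⟨θf sstar hsstar, (hmem sstar hsstar).1, ?_⟩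
  intro Θ hΘ
  obtain ⟨s, hsp⟩ := exists_piece hk₁ hk₂ x Θ
  have hsne : (X ∩ piece x s).Nonempty := ⟨Θ, hΘ, hsp⟩
  have hsT : s ∈ T := Finset.mem_filter.mpr ⟨Finset.mem_univ _, hsne⟩
  calc regObj hk₁ hk₂ x y (θf sstar hsstar) = v sstar := by rw [hv]; simp [dif_pos hsstar]
    _ ≤ v s := hsstarmin s hsT
    _ = regObj hk₁ hk₂ x y (θf s hsne) := by rw [hv]; simp [dif_pos hsne]
    _ ≤ regObj hk₁ hk₂ x y Θ := hminf s hsne Θ ⟨hΘ, hsp⟩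
end

section
/- Let data points (x^ℓ, y_ℓ) ∈ ℝ^d × ℝ, ℓ = 1,…,N, be given, let k₁, k₂ ≥ 1, and for Θ = ((aⁱ, αᵢ)_{i=1}^{k₁}, (bʲ, βⱼ)_{j=1}^{k₂}) ∈ ℝ^{(k₁+k₂)(d+1)} define f(Θ) = (1/(2N)) Σ_{ℓ=1}^{N} ( y_ℓ − [ max_{1≤i≤k₁}((aⁱ)ᵀx^ℓ + αᵢ) − max_{1≤j≤k₂}((bʲ)ᵀx^ℓ + βⱼ) ] )². Then for any polyhedral set X ⊆ ℝ^{(k₁+k₂)(d+1)}, every d-stationary point of f on X is a local minimizer of f on X. -/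
open Matrix Filter

lemma gap_lemma {ι : Type*} [Fintype ι] (u v : ι → ℝ) :
    ∃ γ > 0, ∀ i, u i < v i → u i + γ ≤ v i := by
  classical
  set T := Finset.univ.filter (fun i => u i < v i) with hT
  set s := insert (1:ℝ) (T.image fun i => v i - u i) with hs
  have hsne : s.Nonempty := ⟨1, Finset.mem_insert_self _ _⟩
  refine ⟨s.min' hsne, ?_, ?_⟩
  · have : ∀ a ∈ s, (0:ℝ) < a := by
      intro a ha
      rcases Finset.mem_insert.1 ha with rfl | ha
      · exact one_pos
      · obtain ⟨i, hi, rfl⟩ := Finset.mem_image.1 ha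
        have := (Finset.mem_filter.1 hi).2
        linarith
    exact this _ (s.min'_mem hsne)
  · intro i hi
    have hmem : v i - u i ∈ s :=
      Finset.mem_insert_of_mem (Finset.mem_image_of_mem _ (by simp [hT, hi]))
    have := s.min'_le _ hmem
    linarith

lemma max_shift {k : ℕ} (hk : 0 < k) (u w : Fin k → ℝ) (c : ℝ)
    (hw : ∀ i, |w i| ≤ c)
    (hgap : ∀ i, u i < finMax hk u → u i + 2 * c ≤ finMax hk u) :
    ∃ S, ∀ δ : ℝ, 0 ≤ δ → δ ≤ 1 →
      finMax hk (fun i => u i + δ * w i) = finMax hk u + δ * S := by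
  classical
  have hne : (Finset.univ : Finset (Fin k)).Nonempty :=
    Finset.univ_nonempty_iff.mpr ⟨⟨0, hk⟩⟩
  have hule : ∀ i, u i ≤ finMax hk u := fun i => Finset.le_sup' u (Finset.mem_univ i)
  obtain ⟨i₀, -, hi₀⟩ := Finset.exists_mem_eq_sup' hne u
  have hAne : (Finset.univ.filter (fun i => u i = finMax hk u)).Nonempty :=
    ⟨i₀, Finset.mem_filter.mpr ⟨Finset.mem_univ _, hi₀.symm⟩⟩
  obtain ⟨i₁, hi₁A, hi₁⟩ := Finset.exists_mem_eq_sup' hAne w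
  have hc0 : 0 ≤ c := le_trans (abs_nonneg _) (hw i₀)
  refine ⟨w i₁, fun δ hδ0 hδ1 => ?_⟩
  have hu1 : u i₁ = finMax hk u := (Finset.mem_filter.1 hi₁A).2
  apply le_antisymm
  · apply Finset.sup'_le
    intro i _
    rcases eq_or_lt_of_le (hule i) with heq | hlt
    · have hwS : w i ≤ w i₁ := hi₁ ▸ Finset.le_sup' w
        (Finset.mem_filter.mpr ⟨Finset.mem_univ _, heq⟩)
      have := mul_le_mul_of_nonneg_left hwS hδ0
      linarith
    · have h2 := hgap i hlt
      have h3 : w i ≤ c := (abs_le.1 (hw i)).2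
      have h3' : -c ≤ w i₁ := (abs_le.1 (hw i₁)).1
      have h4 : δ * w i ≤ δ * c := mul_le_mul_of_nonneg_left h3 hδ0
      have h5 : δ * (-c) ≤ δ * w i₁ := mul_le_mul_of_nonneg_left h3' hδ0
      have h6 : δ * c ≤ 1 * c := mul_le_mul_of_nonneg_right hδ1 hc0
      nlinarith
  · have : finMax hk u + δ * w i₁ = u i₁ + δ * w i₁ := by rw [hu1]
    rw [this]
    exact Finset.le_sup' (fun i => u i + δ * w i) (Finset.mem_univ i₁)

set_option synthInstance.maxHeartbeats 1000000 in
/-- Proposition 16(c): every d-stationary point of the least-squares piecewise affine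
regression objective on a polyhedral set `X` is a local minimizer on `X`. -/
theorem stmt_19 {d N k₁ k₂ : ℕ} (hN : 0 < N) (hk₁ : 0 < k₁) (hk₂ : 0 < k₂)
    (x : Fin N → Fin d → ℝ) (y : Fin N → ℝ)
    (X : Set (RegSpace d k₁ k₂)) (hX : IsPolyhedralE X)
    (Θ₀ : RegSpace d k₁ k₂) (hstat : DStatE (regObj hk₁ hk₂ x y) X Θ₀) :
    ∃ ε > 0, ∀ Θ ∈ X, ‖Θ - Θ₀‖ < ε →
      regObj hk₁ hk₂ x y Θ₀ ≤ regObj hk₁ hk₂ x y Θ := by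
  classical
  obtain ⟨hΘ₀X, hstat2⟩ := hstat
  set f := regObj hk₁ hk₂ x y with hf
  set u₁ : Fin N → Fin k₁ → ℝ := fun ℓ i => (Θ₀.1 i).1 ⬝ᵥ x ℓ + (Θ₀.1 i).2 with hu₁
  set u₂ : Fin N → Fin k₂ → ℝ := fun ℓ j => (Θ₀.2 j).1 ⬝ᵥ x ℓ + (Θ₀.2 j).2 with hu₂
  obtain ⟨γ₁, hγ₁pos, hγ₁⟩ := gap_lemma (fun p : Fin N × Fin k₁ => u₁ p.1 p.2)
    (fun p => finMax hk₁ (u₁ p.1))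
  obtain ⟨γ₂, hγ₂pos, hγ₂⟩ := gap_lemma (fun p : Fin N × Fin k₂ => u₂ p.1 p.2)
    (fun p => finMax hk₂ (u₂ p.1))
  set γ := min γ₁ γ₂ with hγ
  have hγpos : 0 < γ := lt_min hγ₁pos hγ₂pos
  set Cx : ℝ := 1 + ∑ ℓ, ∑ m, |x ℓ m| with hCx
  have hCxpos : 0 < Cx := by positivity
  refine ⟨γ / (2 * Cx), by positivity, ?_⟩
  intro Θ hΘX hΘnear
  set v := Θ - Θ₀ with hv
  -- bound on the linear functionals applied to v
  have hwb : ∀ (ℓ : Fin N) (a : Fin d → ℝ) (α : ℝ), (∀ m, |a m| ≤ ‖v‖) → |α| ≤ ‖v‖ →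
      |a ⬝ᵥ x ℓ + α| ≤ γ / 2 := by
    intro ℓ a α ha hα
    have h1 : |a ⬝ᵥ x ℓ| ≤ (∑ m, |x ℓ m|) * ‖v‖ := by
      calc |a ⬝ᵥ x ℓ| = |∑ m, a m * x ℓ m| := rfl
        _ ≤ ∑ m, |a m * x ℓ m| := Finset.abs_sum_le_sum_abs _ _
        _ ≤ ∑ m, ‖v‖ * |x ℓ m| := by
            refine Finset.sum_le_sum fun m _ => ?_
            rw [abs_mul]
            exact mul_le_mul_of_nonneg_right (ha m) (abs_nonneg _)
        _ = (∑ m, |x ℓ m|) * ‖v‖ := by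
            rw [Finset.sum_mul]
            exact Finset.sum_congr rfl fun m _ => mul_comm _ _
    have h2 : (∑ m, |x ℓ m|) + 1 ≤ Cx := by
      rw [hCx]
      have := Finset.single_le_sum (f := fun ℓ => ∑ m, |x ℓ m|)
        (fun _ _ => by positivity) (Finset.mem_univ ℓ)
      linarith
    have h3 : |a ⬝ᵥ x ℓ + α| ≤ Cx * ‖v‖ := by
      have habs := abs_add_le (a ⬝ᵥ x ℓ) α
      have hnn : 0 ≤ ‖v‖ := norm_nonneg v
      nlinarith
    have h6 : ‖v‖ * (2 * Cx) < γ := (lt_div_iff₀ (by positivity)).1 hΘnear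
    nlinarith
  -- components of v are bounded by ‖v‖
  have hv1 : ∀ i : Fin k₁, (∀ m, |(v.1 i).1 m| ≤ ‖v‖) ∧ |(v.1 i).2| ≤ ‖v‖ := by
    intro i
    have hi : ‖v.1 i‖ ≤ ‖v‖ := le_trans (norm_le_pi_norm v.1 i) (norm_fst_le v)
    constructor
    · intro m
      have := le_trans (norm_le_pi_norm (v.1 i).1 m) (le_trans (norm_fst_le (v.1 i)) hi)
      simpa using this
    · exact le_trans (norm_snd_le (v.1 i)) hi
  have hv2 : ∀ j : Fin k₂, (∀ m, |(v.2 j).1 m| ≤ ‖v‖) ∧ |(v.2 j).2| ≤ ‖v‖ := by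
    intro j
    have hj : ‖v.2 j‖ ≤ ‖v‖ := le_trans (norm_le_pi_norm v.2 j) (norm_snd_le v)
    constructor
    · intro m
      have := le_trans (norm_le_pi_norm (v.2 j).1 m) (le_trans (norm_fst_le (v.2 j)) hj)
      simpa using this
    · exact le_trans (norm_snd_le (v.2 j)) hj
  set w₁ : Fin N → Fin k₁ → ℝ := fun ℓ i => (v.1 i).1 ⬝ᵥ x ℓ + (v.1 i).2 with hw₁
  set w₂ : Fin N → Fin k₂ → ℝ := fun ℓ j => (v.2 j).1 ⬝ᵥ x ℓ + (v.2 j).2 with hw₂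
  have hms₁ : ∀ ℓ, ∃ S, ∀ δ : ℝ, 0 ≤ δ → δ ≤ 1 →
      finMax hk₁ (fun i => u₁ ℓ i + δ * w₁ ℓ i) = finMax hk₁ (u₁ ℓ) + δ * S := by
    intro ℓ
    refine max_shift hk₁ (u₁ ℓ) (w₁ ℓ) (γ/2) (fun i => hwb ℓ _ _ (hv1 i).1 (hv1 i).2) ?_
    intro i hlt
    have hle : γ ≤ γ₁ := min_le_left _ _
    have h := hγ₁ (ℓ, i) hlt
    simp only at h
    have : 2 * (γ / 2) = γ := by ring
    rw [this]
    linarith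
  have hms₂ : ∀ ℓ, ∃ S, ∀ δ : ℝ, 0 ≤ δ → δ ≤ 1 →
      finMax hk₂ (fun j => u₂ ℓ j + δ * w₂ ℓ j) = finMax hk₂ (u₂ ℓ) + δ * S := by
    intro ℓ
    refine max_shift hk₂ (u₂ ℓ) (w₂ ℓ) (γ/2) (fun j => hwb ℓ _ _ (hv2 j).1 (hv2 j).2) ?_
    intro j hlt
    have hle : γ ≤ γ₂ := min_le_right _ _
    have h := hγ₂ (ℓ, j) hlt
    simp only at h
    have : 2 * (γ / 2) = γ := by ring
    rw [this]
    linarith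
  choose S₁ hS₁ using hms₁
  choose S₂ hS₂ using hms₂
  set r : Fin N → ℝ := fun ℓ => y ℓ - (finMax hk₁ (u₁ ℓ) - finMax hk₂ (u₂ ℓ)) with hr
  set t : Fin N → ℝ := fun ℓ => S₁ ℓ - S₂ ℓ with ht
  set B : ℝ := (1 / (2 * (N:ℝ))) * ∑ ℓ, (-2 * r ℓ * t ℓ) with hB
  set Cq : ℝ := (1 / (2 * (N:ℝ))) * ∑ ℓ, (t ℓ)^2 with hCq
  -- linearity of pieces along the ray
  have hlin₁ : ∀ (δ : ℝ) (ℓ : Fin N) (i : Fin k₁),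
      ((Θ₀ + δ • v).1 i).1 ⬝ᵥ x ℓ + ((Θ₀ + δ • v).1 i).2 = u₁ ℓ i + δ * w₁ ℓ i := by
    intro δ ℓ i
    simp only [Prod.fst_add, Prod.snd_add, Pi.add_apply, Prod.smul_fst, Prod.smul_snd,
      Pi.smul_apply, add_dotProduct, smul_dotProduct, smul_eq_mul, hu₁, hw₁]
    ring
  have hlin₂ : ∀ (δ : ℝ) (ℓ : Fin N) (j : Fin k₂),
      ((Θ₀ + δ • v).2 j).1 ⬝ᵥ x ℓ + ((Θ₀ + δ • v).2 j).2 = u₂ ℓ j + δ * w₂ ℓ j := by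
    intro δ ℓ j
    simp only [Prod.fst_add, Prod.snd_add, Pi.add_apply, Prod.smul_fst, Prod.smul_snd,
      Pi.smul_apply, add_dotProduct, smul_dotProduct, smul_eq_mul, hu₂, hw₂]
    ring
  have hf0 : f Θ₀ = (1 / (2 * (N:ℝ))) * ∑ ℓ, (r ℓ)^2 := rfl
  have hfval : ∀ δ : ℝ, 0 ≤ δ → δ ≤ 1 →
      f (Θ₀ + δ • v) = f Θ₀ + δ * B + δ^2 * Cq := by
    intro δ hδ0 hδ1
    have step1 : f (Θ₀ + δ • v) = (1 / (2 * (N:ℝ))) * ∑ ℓ, (r ℓ - δ * t ℓ)^2 := by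
      rw [hf, regObj]
      congr 1
      refine Finset.sum_congr rfl fun ℓ _ => ?_
      have e1 : finMax hk₁ (fun i => ((Θ₀ + δ • v).1 i).1 ⬝ᵥ x ℓ + ((Θ₀ + δ • v).1 i).2)
          = finMax hk₁ (u₁ ℓ) + δ * S₁ ℓ := by
        rw [show (fun i => ((Θ₀ + δ • v).1 i).1 ⬝ᵥ x ℓ + ((Θ₀ + δ • v).1 i).2)
            = (fun i => u₁ ℓ i + δ * w₁ ℓ i) from funext (hlin₁ δ ℓ)]
        exact hS₁ ℓ δ hδ0 hδ1
      have e2 : finMax hk₂ (fun j => ((Θ₀ + δ • v).2 j).1 ⬝ᵥ x ℓ + ((Θ₀ + δ • v).2 j).2)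
          = finMax hk₂ (u₂ ℓ) + δ * S₂ ℓ := by
        rw [show (fun j => ((Θ₀ + δ • v).2 j).1 ⬝ᵥ x ℓ + ((Θ₀ + δ • v).2 j).2)
            = (fun j => u₂ ℓ j + δ * w₂ ℓ j) from funext (hlin₂ δ ℓ)]
        exact hS₂ ℓ δ hδ0 hδ1
      rw [e1, e2, hr, ht]
      ring
    have expand : ∑ ℓ, (r ℓ - δ * t ℓ)^2
        = ∑ ℓ, (r ℓ)^2 + δ * ∑ ℓ, (-2 * r ℓ * t ℓ) + δ^2 * ∑ ℓ, (t ℓ)^2 := by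
      rw [Finset.mul_sum, Finset.mul_sum, ← Finset.sum_add_distrib, ← Finset.sum_add_distrib]
      exact Finset.sum_congr rfl fun ℓ _ => by ring
    rw [step1, expand, hf0, hB, hCq]
    ring
  obtain ⟨L, hL, hL0⟩ := hstat2 Θ hΘX
  have hderiv : Tendsto (fun δ : ℝ => (f (Θ₀ + δ • v) - f Θ₀) / δ) (nhdsWithin 0 (Set.Ioi 0))
      (nhds B) := by
    have hcont : Tendsto (fun δ : ℝ => B + δ * Cq) (nhdsWithin 0 (Set.Ioi 0)) (nhds B) := by
      have h1 : Tendsto (fun δ : ℝ => δ * Cq) (nhds (0:ℝ)) (nhds (0 * Cq)) :=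
        tendsto_id.mul_const Cq
      have h2 : Tendsto (fun δ : ℝ => B + δ * Cq) (nhds (0:ℝ)) (nhds (B + 0 * Cq)) :=
        h1.const_add B
      have h3 := h2.mono_left (nhdsWithin_le_nhds (s := Set.Ioi (0:ℝ)))
      simpa using h3
    refine hcont.congr' ?_
    filter_upwards [Ioo_mem_nhdsGT_of_mem (Set.left_mem_Ico.mpr one_pos)] with δ hδ
    rw [hfval δ hδ.1.le hδ.2.le]
    have hδne : δ ≠ 0 := ne_of_gt hδ.1
    field_simp
    ring
  have hBL : B = L := tendsto_nhds_unique hderiv hL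
  have h1 : f Θ = f Θ₀ + B + Cq := by
    have hΘeq : Θ₀ + (1:ℝ) • v = Θ := by rw [one_smul, hv]; abel
    have := hfval 1 zero_le_one le_rfl
    rw [hΘeq] at this
    simpa using this
  have hCqnn : 0 ≤ Cq := by
    rw [hCq]
    have : 0 ≤ ∑ ℓ, (t ℓ)^2 := Finset.sum_nonneg fun ℓ _ => sq_nonneg _
    positivity
  linarith
end
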